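/- arXiv:2009.13308 — 3 statements merged into one kernel-verified Lean document; each statement's English description precedes it below -/
import Mathlib

section
/- Let E be a Banach space, Z a Banach space, and V : E → Z* a linear isometry onto its image such that V(E) is weak-star closed in Z*. Then E is isometrically isomorphic to the dual of the Banach space Z / (^⊥V(E)), where ^⊥V(E) = {z ∈ Z : φ(z) = 0 for all φ ∈ V(E)}. -/
open NormedSpace

/-- The pre-annihilator in `Z` of the image of `V : E → Z*`. -/
noncomputable def preAnnihilator {E Z : Type*}
    [NormedAddCommGroup E] [NormedSpace ℝ E]
    [NormedAddCommGroup Z] [NormedSpace ℝ Z]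
    (V : E →ₗᵢ[ℝ] (Z →L[ℝ] ℝ)) : Submodule ℝ Z where
  carrier := {z | ∀ x : E, V x z = 0}
  add_mem' {a b} ha hb x := by simp [ha x, hb x]
  zero_mem' x := by simp
  smul_mem' c z hz x := by simp [hz x]

/-- Evaluation at points of `Z`, as a linear map into linear functionals on the weak dual. -/
noncomputable def evalWD (Z : Type*) [NormedAddCommGroup Z] [NormedSpace ℝ Z] :
    Z →ₗ[ℝ] (WeakDual ℝ Z →ₗ[ℝ] ℝ) where
  toFun z :=
    { toFun := fun ψ => ψ z
      map_add' := fun ψ φ => rfl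
      map_smul' := fun c ψ => rfl }
  map_add' z w := by ext ψ; simp; rfl
  map_smul' c z := by ext ψ; simp; exact Or.inl rfl

/-- Every continuous linear functional on the weak-star dual is evaluation at a point. -/
lemma exists_eval_of_continuous {Z : Type*} [NormedAddCommGroup Z] [NormedSpace ℝ Z]
    (f : WeakDual ℝ Z →L[ℝ] ℝ) : ∃ z : Z, ∀ ψ : WeakDual ℝ Z, f ψ = ψ z := by
  have hb := LinearMap.hasBasis_weakBilin (topDualPairing ℝ Z)
  have hcont : f ⁻¹' Metric.ball (0 : ℝ) 1 ∈ nhds (0 : WeakDual ℝ Z) := by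
    have h := f.continuous.continuousAt (x := (0 : WeakDual ℝ Z))
    refine h.preimage_mem_nhds ?_
    rw [map_zero]
    exact Metric.ball_mem_nhds _ one_pos
  obtain ⟨U, hU, hUsub⟩ := hb.mem_iff.mp hcont
  obtain ⟨s, r, hr, rfl⟩ := (SeminormFamily.basisSets_iff _).mp hU
  have hker : ⨅ (i : {z // z ∈ s}), LinearMap.ker (evalWD Z i.1) ≤
      LinearMap.ker (f : WeakDual ℝ Z →ₗ[ℝ] ℝ) := by
    intro ψ hψ
    have hz : ∀ z ∈ s, ψ z = 0 := by
      intro z hzs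
      have := (Submodule.mem_iInf _).mp hψ ⟨z, hzs⟩
      exact this
    have hmem : ∀ c : ℝ, (c • ψ) ∈
        Seminorm.ball (s.sup (topDualPairing ℝ Z).toSeminormFamily) 0 r := by
      intro c
      refine (Seminorm.mem_ball_zero _).mpr ?_
      refine (Seminorm.finset_sup_apply_lt hr ?_)
      intro i hi
      have h0 : ((topDualPairing ℝ Z).toSeminormFamily i) (c • ψ) = ‖c * ψ i‖ := rfl
      refine h0.trans_lt ?_
      rw [hz i hi, mul_zero, norm_zero]
      exact hr
    have habs : ∀ c : ℝ, ‖c * f ψ‖ < 1 := by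
      intro c
      have : f (c • ψ) ∈ Metric.ball (0 : ℝ) 1 := hUsub (hmem c)
      simp only [Set.mem_preimage, Metric.mem_ball, dist_zero_right] at this
      simpa [map_smul] using this
    have hfψ : f ψ = 0 := by
      by_contra hne
      have h2 := habs (2 / ‖f ψ‖)
      have hpos : 0 < ‖f ψ‖ := norm_pos_iff.mpr hne
      rw [norm_mul] at h2
      have h3 : ‖(2:ℝ) / ‖f ψ‖‖ = 2 / ‖f ψ‖ := by
        rw [Real.norm_eq_abs]; exact abs_of_pos (by positivity)
      rw [h3, div_mul_cancel₀ _ (ne_of_gt hpos)] at h2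
      linarith
    simpa [LinearMap.mem_ker] using hfψ
  have hspan := mem_span_of_iInf_ker_le_ker hker
  have hrange : Submodule.span ℝ (Set.range fun i : {z // z ∈ s} => evalWD Z i.1) ≤
      LinearMap.range (evalWD Z) := by
    rw [Submodule.span_le]
    rintro _ ⟨i, rfl⟩
    exact ⟨i.1, rfl⟩
  obtain ⟨z, hzeq⟩ := hrange hspan
  refine ⟨z, fun ψ => ?_⟩
  have := LinearMap.congr_fun hzeq ψ
  exact this.symm

/-- Bipolar-type lemma: a functional vanishing on the pre-annihilator of a weak-star closed
subspace belongs to that subspace. -/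
lemma mem_range_of_vanishing {E Z : Type*}
    [NormedAddCommGroup E] [NormedSpace ℝ E]
    [NormedAddCommGroup Z] [NormedSpace ℝ Z]
    (V : E →ₗᵢ[ℝ] (Z →L[ℝ] ℝ))
    (hclosed : IsClosed ((fun f => StrongDual.toWeakDual f) ''
      (Set.range fun x => V x) : Set (WeakDual ℝ Z)))
    (g : Z →L[ℝ] ℝ) (hg : ∀ z ∈ preAnnihilator V, g z = 0) :
    ∃ x : E, (V x : Z →L[ℝ] ℝ) = g := by
  by_contra hcon
  push_neg at hcon
  set S : Set (WeakDual ℝ Z) := ((fun f => StrongDual.toWeakDual f) ''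
      (Set.range fun x => V x)) with hS
  have hmemS : ∀ x : E, StrongDual.toWeakDual (V x : Z →L[ℝ] ℝ) ∈ S :=
    fun x => ⟨V x, ⟨x, rfl⟩, rfl⟩
  have hS0 : (0 : WeakDual ℝ Z) ∈ S := by
    have := hmemS 0
    simpa [map_zero] using this
  have hSsmul : ∀ (c : ℝ), ∀ ψ ∈ S, c • ψ ∈ S := by
    rintro c _ ⟨h, ⟨x, rfl⟩, rfl⟩
    refine ⟨V (c • x), ⟨c • x, rfl⟩, ?_⟩
    simp [map_smul]
  have hSconv : Convex ℝ S := by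
    have h1 : Convex ℝ (Set.range fun x : E => (V x : Z →L[ℝ] ℝ)) := by
      have : (Set.range fun x : E => (V x : Z →L[ℝ] ℝ)) =
          (LinearMap.range V.toLinearMap : Submodule ℝ (Z →L[ℝ] ℝ)) := by
        ext φ; simp [LinearMap.mem_range]
      rw [this]
      exact (LinearMap.range V.toLinearMap).convex
    exact h1.linear_image (StrongDual.toWeakDual (𝕜 := ℝ) (E := Z)).toLinearMap
  have hnot : StrongDual.toWeakDual g ∉ S := by
    rintro ⟨h, ⟨x, rfl⟩, heq⟩
    exact hcon x (StrongDual.toWeakDual.injective heq)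
  haveI : LocallyConvexSpace ℝ (WeakDual ℝ Z) :=
    WeakBilin.locallyConvexSpace (B := topDualPairing ℝ Z)
  obtain ⟨f, u, hfu, hfb⟩ := geometric_hahn_banach_point_closed hSconv hclosed hnot
  have hu0 : u < 0 := by
    have := hfb 0 hS0
    simpa using this
  have hfS : ∀ ψ ∈ S, f ψ = 0 := by
    intro ψ hψ
    by_contra hne
    have hsm : ∀ c : ℝ, u < c * f ψ := by
      intro c
      have := hfb (c • ψ) (hSsmul c ψ hψ)
      simpa [map_smul, smul_eq_mul] using this
    have h1 := hsm ((u - 1) / f ψ)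
    rw [div_mul_cancel₀ _ hne] at h1
    linarith
  obtain ⟨z, hzeq⟩ := exists_eval_of_continuous f
  have hzN : z ∈ preAnnihilator V := by
    intro x
    have h1 := hfS _ (hmemS x)
    rw [hzeq] at h1
    exact h1
  have hgz : g z = 0 := hg z hzN
  have h2 : f (StrongDual.toWeakDual g) = g z := hzeq _
  rw [h2, hgz] at hfu
  linarith

/-- If `V : E → Z*` is a linear isometric embedding whose image is weak-star closed in `Z*`,
then `E` is isometrically isomorphic to the dual of the Banach space `Z / (^⊥V(E))`. -/
theorem isometric_dual_of_weakStarClosed_embedding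
    (E Z : Type*) [NormedAddCommGroup E] [NormedSpace ℝ E] [CompleteSpace E]
    [NormedAddCommGroup Z] [NormedSpace ℝ Z] [CompleteSpace Z]
    (V : E →ₗᵢ[ℝ] (Z →L[ℝ] ℝ))
    (hclosed : IsClosed ((fun f => StrongDual.toWeakDual f) ''
      (Set.range fun x => V x) : Set (WeakDual ℝ Z))) :
    ∃ e : E ≃ₗᵢ[ℝ] ((Z ⧸ preAnnihilator V) →L[ℝ] ℝ),
      ∀ (x : E) (z : Z), e x (Submodule.Quotient.mk z) = V x z := by
  classical
  set N : Submodule ℝ Z := preAnnihilator V with hNdef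
  have hle : ∀ x : E, N ≤ LinearMap.ker ((V x : Z →L[ℝ] ℝ) : Z →ₗ[ℝ] ℝ) := by
    intro x z hz
    simpa [LinearMap.mem_ker] using hz x
  -- the key norm bound for the lifted functionals
  have hbound : ∀ (x : E) (z : Z),
      ‖V x z‖ ≤ ‖x‖ * ‖(Submodule.Quotient.mk z : Z ⧸ N)‖ := by
    intro x z
    refine le_of_forall_pos_le_add ?_
    intro ε hε
    rcases eq_or_ne (‖x‖) 0 with h0 | h0
    · have hVx : (V x : Z →L[ℝ] ℝ) = 0 := by
        have : ‖V x‖ = 0 := by rw [V.norm_map]; exact h0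
        exact norm_eq_zero.mp this
      rw [hVx]
      simp only [ContinuousLinearMap.zero_apply, norm_zero]
      positivity
    · have hxpos : 0 < ‖x‖ := lt_of_le_of_ne (norm_nonneg x) (Ne.symm h0)
      obtain ⟨m, hm, hm'⟩ := Submodule.Quotient.norm_mk_lt
        (Submodule.Quotient.mk z : Z ⧸ N) (div_pos hε hxpos)
      have hmz : m - z ∈ N := (Submodule.Quotient.eq N).mp hm
      have hVm : V x m = V x z := by
        have h1 : V x (m - z) = 0 := hmz x
        have h2 : V x (m - z) = V x m - V x z := map_sub _ _ _
        linarith [h2 ▸ h1]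
      calc ‖V x z‖ = ‖V x m‖ := by rw [hVm]
        _ ≤ ‖V x‖ * ‖m‖ := (V x).le_opNorm m
        _ = ‖x‖ * ‖m‖ := by rw [V.norm_map]
        _ ≤ ‖x‖ * (‖(Submodule.Quotient.mk z : Z ⧸ N)‖ + ε / ‖x‖) := by
            exact mul_le_mul_of_nonneg_left (le_of_lt hm') (norm_nonneg x)
        _ = ‖x‖ * ‖(Submodule.Quotient.mk z : Z ⧸ N)‖ + ε := by
            field_simp
  -- construct the lifted functionals
  let L : E → ((Z ⧸ N) →ₗ[ℝ] ℝ) := fun x => N.liftQ ((V x : Z →L[ℝ] ℝ) : Z →ₗ[ℝ] ℝ) (hle x)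
  have hLapp : ∀ (x : E) (z : Z), L x (Submodule.Quotient.mk z) = V x z := by
    intro x z
    simp [L, Submodule.liftQ_apply]
  have hLbound : ∀ (x : E) (q : Z ⧸ N), ‖L x q‖ ≤ ‖x‖ * ‖q‖ := by
    intro x q
    obtain ⟨z, rfl⟩ := Submodule.Quotient.mk_surjective N q
    rw [hLapp]
    exact hbound x z
  let Tc : E → ((Z ⧸ N) →L[ℝ] ℝ) := fun x => (L x).mkContinuous ‖x‖ (hLbound x)
  have hTcapp : ∀ (x : E) (z : Z), Tc x (Submodule.Quotient.mk z) = V x z := by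
    intro x z
    simp [Tc, LinearMap.mkContinuous_apply, hLapp]
  have hTcnorm : ∀ x : E, ‖Tc x‖ = ‖x‖ := by
    intro x
    refine le_antisymm (LinearMap.mkContinuous_norm_le _ (norm_nonneg x) _) ?_
    rw [← V.norm_map x]
    refine (V x).opNorm_le_bound (norm_nonneg (Tc x)) (fun z => ?_)
    calc ‖V x z‖ = ‖Tc x (Submodule.Quotient.mk z)‖ := by rw [hTcapp]
      _ ≤ ‖Tc x‖ * ‖(Submodule.Quotient.mk z : Z ⧸ N)‖ := (Tc x).le_opNorm _
      _ ≤ ‖Tc x‖ * ‖z‖ := by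
          have hmk : ‖(Submodule.Quotient.mk z : Z ⧸ N)‖ ≤ ‖z‖ :=
            Submodule.Quotient.norm_mk_le N z
          exact mul_le_mul_of_nonneg_left hmk (norm_nonneg (Tc x))
  -- T as a linear isometry
  let T : E →ₗᵢ[ℝ] ((Z ⧸ N) →L[ℝ] ℝ) :=
    { toFun := Tc
      map_add' := by
        intro a b
        ext q
        obtain ⟨z, rfl⟩ := Submodule.Quotient.mk_surjective N q
        simp [hTcapp, map_add]
      map_smul' := by
        intro c a
        ext q
        obtain ⟨z, rfl⟩ := Submodule.Quotient.mk_surjective N q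
        simp [hTcapp, map_smul]
      norm_map' := hTcnorm }
  -- surjectivity
  have hmkQc : ∃ π : Z →L[ℝ] (Z ⧸ N), ∀ z : Z, π z = Submodule.Quotient.mk z := by
    refine ⟨(N.mkQ).mkContinuous 1 (fun z => ?_), fun z => ?_⟩
    · simpa using Submodule.Quotient.norm_mk_le N z
    · simp [LinearMap.mkContinuous_apply]
  obtain ⟨π, hπ⟩ := hmkQc
  have hsurj : Function.Surjective T := by
    intro g
    have hg : ∀ z ∈ preAnnihilator V, (g.comp π) z = 0 := by
      intro z hz
      have : (Submodule.Quotient.mk z : Z ⧸ N) = 0 :=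
        (Submodule.Quotient.mk_eq_zero N).mpr hz
      simp [ContinuousLinearMap.comp_apply, hπ, this]
    obtain ⟨x, hx⟩ := mem_range_of_vanishing V hclosed (g.comp π) hg
    refine ⟨x, ?_⟩
    ext q
    obtain ⟨z, rfl⟩ := Submodule.Quotient.mk_surjective N q
    have h1 : T x (Submodule.Quotient.mk z) = V x z := hTcapp x z
    rw [h1, hx]
    simp [ContinuousLinearMap.comp_apply, hπ]
  refine ⟨LinearIsometryEquiv.ofSurjective T hsurj, fun x z => ?_⟩
  have : LinearIsometryEquiv.ofSurjective T hsurj x = T x := rfl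
  rw [this]
  exact hTcapp x z
end

section
/- Let X be a reflexive Banach space, F ⊆ X* a family of functionals, and E = {x ∈ X : ‖x‖_E := sup_{f∈F} |f(x)| < ∞}, assumed to be a Banach space continuously embedded in X. Then the closed unit ball of E is compact in the topology σ(E, F). -/
open NormedSpace Metric

/-- If the image of `s` under `φ` is compact, then `s` is compact in the topology induced
by `φ`. -/
lemma isCompact_induced_of_isCompact_image {α β : Type*} [t : TopologicalSpace β]
    (φ : α → β) (s : Set α) (h : IsCompact (φ '' s)) :
    @IsCompact α (TopologicalSpace.induced φ t) s := by
  letI := TopologicalSpace.induced φ t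
  rw [isCompact_iff_ultrafilter_le_nhds]
  intro U hU
  have hmap : (U.map φ : Filter β) ≤ Filter.principal (φ '' s) := by
    calc (U.map φ : Filter β) ≤ Filter.map φ (Filter.principal s) := Filter.map_mono hU
      _ = Filter.principal (φ '' s) := Filter.map_principal
  obtain ⟨y, hy, hyle⟩ := isCompact_iff_ultrafilter_le_nhds.mp h (U.map φ) hmap
  obtain ⟨x, hxs, rfl⟩ := hy
  refine ⟨x, hxs, ?_⟩
  rw [nhds_induced]
  exact Filter.map_le_iff_le_comap.mp hyle

/-- In a reflexive Banach space, closed balls are weakly compact. -/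
lemma weak_isCompact_closedBall (X : Type*) [NormedAddCommGroup X] [NormedSpace ℝ X]
    [CompleteSpace X] (hrefl : Function.Surjective (NormedSpace.inclusionInDoubleDual ℝ X))
    (r : ℝ) (S : Set X) (hS : S = Metric.closedBall (0 : X) r) :
    IsCompact (X := WeakSpace ℝ X) S := by
  set J : X → StrongDual ℝ (StrongDual ℝ X) := fun x => NormedSpace.inclusionInDoubleDual ℝ X x with hJ
  have hJnorm : ∀ x : X, ‖J x‖ = ‖x‖ := fun x =>
    (NormedSpace.inclusionInDoubleDualLi ℝ (E := X)).norm_map x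
  have hJinj : Function.Injective J := fun a b hab =>
    (NormedSpace.inclusionInDoubleDualLi ℝ (E := X)).injective hab
  -- inverse map
  set g : WeakDual ℝ (StrongDual ℝ X) → X := fun ψ => (hrefl ψ).choose with hg
  have hgJ : ∀ ψ : WeakDual ℝ (StrongDual ℝ X), J (g ψ) = ψ := fun ψ => (hrefl ψ).choose_spec
  have hcont : Continuous (X := WeakDual ℝ (StrongDual ℝ X)) (Y := WeakSpace ℝ X) g := by
    apply WeakBilin.continuous_of_continuous_eval
    intro f
    have : (fun ψ : WeakDual ℝ (StrongDual ℝ X) => (topDualPairing ℝ X).flip (g ψ) f)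
        = fun ψ : WeakDual ℝ (StrongDual ℝ X) => ψ f := by
      funext ψ
      have h1 := hgJ ψ
      calc (topDualPairing ℝ X).flip (g ψ) f = (J (g ψ)) f := rfl
        _ = ψ f := by rw [h1]; rfl
    rw [this]
    exact WeakDual.eval_continuous f
  set T : Set (WeakDual ℝ (StrongDual ℝ X)) :=
    WeakDual.toStrongDual ⁻¹' Metric.closedBall (0 : StrongDual ℝ (StrongDual ℝ X)) r with hT
  have himg : S = g '' T := by
    ext x
    simp only [hS, hT, Set.mem_image, Set.mem_preimage, Metric.mem_closedBall, dist_zero_right]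
    constructor
    · intro hx
      refine ⟨J x, ?_, hJinj (hgJ (J x))⟩
      show dist (J x) (0 : StrongDual ℝ (StrongDual ℝ X)) ≤ r; refine (dist_zero_right (J x)).le.trans ?_
      rw [hJnorm]; exact hx
    · rintro ⟨ψ, hψ, rfl⟩
      have h2 : ‖J (g ψ)‖ = ‖g ψ‖ := hJnorm (g ψ)
      rw [← h2, hgJ ψ]
      exact (dist_zero_right (WeakDual.toStrongDual ψ)).symm.le.trans hψ
  rw [himg]
  exact (WeakDual.isCompact_closedBall (0 : StrongDual ℝ (StrongDual ℝ X)) r).image hcont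

/-- Let `X` be a reflexive Banach space, `F ⊆ X*`, and `E = {x : sup_{f∈F}|f(x)| < ∞}` with the
norm `‖x‖_E = sup_{f∈F}|f(x)|`, continuously embedded in `X`. Then the closed unit ball of `E`,
namely `{x : |f(x)| ≤ 1 ∀ f ∈ F}`, is compact in the topology `σ(E, F)` of pointwise
convergence against `F`. -/
theorem unit_ball_sigmaEF_compact_of_reflexive
    (X : Type*) [NormedAddCommGroup X] [NormedSpace ℝ X] [CompleteSpace X]
    (hrefl : Function.Surjective (NormedSpace.inclusionInDoubleDual ℝ X))
    (F : Set (StrongDual ℝ X)) (lam : ℝ) (hlam : 0 < lam)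
    (hemb : ∀ x : X, BddAbove (Set.range fun f : F => |(f : StrongDual ℝ X) x|) →
      ‖x‖ ≤ lam * ⨆ f : F, |(f : StrongDual ℝ X) x|) :
    @IsCompact X
      (TopologicalSpace.induced (fun (x : X) (f : F) => (f : StrongDual ℝ X) x)
        Pi.topologicalSpace)
      {x : X | ∀ f ∈ F, |f x| ≤ 1} := by
  set K : Set X := {x : X | ∀ f ∈ F, |f x| ≤ 1} with hK
  -- K is contained in the closed ball of radius lam
  have hKball : K ⊆ Metric.closedBall (0 : X) lam := by
    intro x hx
    have hbdd : BddAbove (Set.range fun f : F => |(f : StrongDual ℝ X) x|) := by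
      refine ⟨1, ?_⟩
      rintro _ ⟨f, rfl⟩
      exact hx f f.2
    have hsup : (⨆ f : F, |(f : StrongDual ℝ X) x|) ≤ 1 :=
      Real.iSup_le (fun f => hx f f.2) zero_le_one
    have := hemb x hbdd
    rw [Metric.mem_closedBall, dist_zero_right]
    calc ‖x‖ ≤ lam * ⨆ f : F, |(f : StrongDual ℝ X) x| := this
      _ ≤ lam * 1 := by nlinarith
      _ = lam := mul_one lam
  -- K is weakly closed
  have hKclosed : IsClosed (X := WeakSpace ℝ X) K := by
    have : K = ⋂ f ∈ F, {x : X | |f x| ≤ 1} := by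
      ext x; simp [hK, Set.mem_iInter]
    rw [this]
    refine isClosed_biInter fun f hf => ?_
    have hfc : Continuous fun x : WeakSpace ℝ X => f x :=
      WeakBilin.eval_continuous ((topDualPairing ℝ X).flip) f
    exact isClosed_le (continuous_abs.comp hfc) continuous_const
  -- K is weakly compact
  have hKw : IsCompact (X := WeakSpace ℝ X) K :=
    (weak_isCompact_closedBall X hrefl lam _ rfl).of_isClosed_subset hKclosed hKball
  -- the evaluation map is weakly continuous
  have hφ : Continuous fun (x : WeakSpace ℝ X) (f : F) => (f : StrongDual ℝ X) x := by
    refine continuous_pi fun f => ?_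
    exact WeakBilin.eval_continuous ((topDualPairing ℝ X).flip) (f : StrongDual ℝ X)
  exact isCompact_induced_of_isCompact_image _ K (hKw.image hφ)
end

section
/- Let E be a Banach space with countable norming set F = {f_j} ⊆ E*, V : E → ℓ^∞ the associated isometry, and E_C defined from an M-embedded predual C of ℓ¹ such that the approximation property (AP) holds. Then for every x ∈ E the distance formula dist_E(x, E_C) = limsup_{j→∞} |f_j(x)| holds. -/
open NormedSpace Filter
open scoped ENNReal

/-- The embedding `V : E → ℓ^∞`, `V(x) = (f_n(x))_n`, as a linear map. -/
noncomputable def Vlin (E : Type*) [NormedAddCommGroup E] [NormedSpace ℝ E]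
    (f : ℕ → StrongDual ℝ E) (hb : ∀ x : E, BddAbove (Set.range fun n => ‖f n x‖)) :
    E →ₗ[ℝ] lp (fun _ : ℕ => ℝ) ∞ where
  toFun x := ⟨fun n => f n x, memℓp_infty (hb x)⟩
  map_add' x y := lp.ext (funext fun n => map_add (f n) x y)
  map_smul' c x := lp.ext (funext fun n => map_smul (f n) c x)

namespace DFaux

abbrev Linf : Type := lp (fun _ : ℕ => ℝ) ∞

lemma exists_ulim (U : Ultrafilter ℕ) (ζ : Linf) :
    ∃ a : ℝ, |a| ≤ ‖ζ‖ ∧ Tendsto (fun n => ζ n) (U : Filter ℕ) (nhds a) := by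
  have hmem : Set.Icc (-‖ζ‖) ‖ζ‖ ∈ Ultrafilter.map (fun n => ζ n) U := by
    refine Filter.mem_map.mpr (Filter.univ_mem' fun n => ?_)
    have := lp.norm_apply_le_norm (by norm_num) ζ n
    simp only [Real.norm_eq_abs] at this
    exact abs_le.mp this
  obtain ⟨a, ha, hle⟩ := isCompact_Icc.ultrafilter_le_nhds
    (Ultrafilter.map (fun n => ζ n) U) (Filter.le_principal_iff.mpr hmem)
  refine ⟨a, abs_le.mpr ha, ?_⟩
  rwa [Ultrafilter.coe_map] at hle

noncomputable def ulim (U : Ultrafilter ℕ) (ζ : Linf) : ℝ :=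
  (exists_ulim U ζ).choose

lemma ulim_abs_le (U : Ultrafilter ℕ) (ζ : Linf) : |ulim U ζ| ≤ ‖ζ‖ :=
  (exists_ulim U ζ).choose_spec.1

lemma ulim_tendsto (U : Ultrafilter ℕ) (ζ : Linf) :
    Tendsto (fun n => ζ n) (U : Filter ℕ) (nhds (ulim U ζ)) :=
  (exists_ulim U ζ).choose_spec.2

lemma ulim_eq (U : Ultrafilter ℕ) (ζ : Linf) {a : ℝ}
    (h : Tendsto (fun n => ζ n) (U : Filter ℕ) (nhds a)) : ulim U ζ = a :=
  tendsto_nhds_unique (ulim_tendsto U ζ) h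

noncomputable def ulimCLM (U : Ultrafilter ℕ) : Linf →L[ℝ] ℝ :=
  LinearMap.mkContinuous
    { toFun := ulim U
      map_add' := fun ζ ζ' => by
        refine ulim_eq U _ ?_
        have h := (ulim_tendsto U ζ).add (ulim_tendsto U ζ')
        refine h.congr fun n => ?_
        simp [lp.coeFn_add]
      map_smul' := fun c ζ => by
        refine ulim_eq U _ ?_
        have h := (ulim_tendsto U ζ).const_mul c
        refine h.congr fun n => ?_
        simp [lp.coeFn_smul] }
    1 (fun ζ => by
      rw [one_mul, Real.norm_eq_abs]
      exact ulim_abs_le U ζ)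

lemma ulimCLM_apply (U : Ultrafilter ℕ) (ζ : Linf) : ulimCLM U ζ = ulim U ζ := rfl

lemma ulimCLM_norm_le (U : Ultrafilter ℕ) : ‖ulimCLM U‖ ≤ 1 :=
  LinearMap.mkContinuous_norm_le _ zero_le_one _








lemma exists_adq (r : ℝ) (k : ℕ) :
    ∃ q : ℚ, r + 1/(k+2) < (q:ℝ) ∧ (q:ℝ) < r + 1/(k+1) := by
  refine exists_rat_btwn ?_
  have h1 : (0:ℝ) < (k:ℝ) + 1 := by positivity
  have h2 : (0:ℝ) < (k:ℝ) + 2 := by positivity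
  have : (1:ℝ)/(k+2) < 1/(k+1) := by
    rw [div_lt_div_iff₀ h2 h1]; linarith
  linarith

noncomputable def adq (r : ℝ) (k : ℕ) : ℚ := (exists_adq r k).choose

lemma adq_gt (r : ℝ) (k : ℕ) : r + 1/(k+2) < (adq r k : ℝ) := (exists_adq r k).choose_spec.1

lemma adq_lt (r : ℝ) (k : ℕ) : (adq r k : ℝ) < r + 1/(k+1) := (exists_adq r k).choose_spec.2

lemma adq_inj (r : ℝ) : Function.Injective (adq r) := by
  have key : ∀ k k' : ℕ, k < k' → adq r k ≠ adq r k' := by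
    intro k k' hkk' hne
    have h1 : (adq r k' : ℝ) < r + 1/(k'+1) := adq_lt r k'
    have h2 : r + 1/(k+2) < (adq r k : ℝ) := adq_gt r k
    have h3 : (1:ℝ)/(k'+1) ≤ 1/(k+2) := by
      apply one_div_le_one_div_of_le (by positivity)
      have : (k:ℝ) + 1 ≤ (k':ℝ) := by exact_mod_cast hkk'
      linarith
    rw [hne] at h2
    linarith
  intro k k' h
  rcases lt_trichotomy k k' with hl | he | hl
  · exact absurd h (key _ _ hl)
  · exact he
  · exact absurd h.symm (key _ _ hl)

lemma adq_inter_finite {r s : ℝ} (hrs : r < s) :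
    (Set.range (adq r) ∩ Set.range (adq s)).Finite := by
  have hsub : Set.range (adq r) ∩ Set.range (adq s) ⊆
      adq r '' {k : ℕ | (k:ℝ) < 1/(s-r)} := by
    rintro v ⟨⟨k, hk⟩, ⟨j, hj⟩⟩
    refine ⟨k, ?_, hk⟩
    have h1 : s + 1/(j+2) < (v:ℝ) := hj ▸ adq_gt s j
    have h2 : (v:ℝ) < r + 1/(k+1) := hk ▸ adq_lt r k
    have hj2 : (0:ℝ) < 1/((j:ℝ)+2) := by positivity
    have hk1 : (0:ℝ) < (k:ℝ)+1 := by positivity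
    have hsr : (0:ℝ) < s - r := by linarith
    have : s - r < 1/(k+1) := by linarith
    have hlt : (k:ℝ) + 1 < 1/(s-r) := by
      rw [lt_div_iff₀ hsr]
      have e : (1/((k:ℝ)+1))*((k:ℝ)+1) = 1 := by field_simp
      nlinarith [mul_lt_mul_of_pos_right this hk1]
    simp only [Set.mem_setOf_eq]
    linarith
  refine Set.Finite.subset (Set.Finite.image _ ?_) hsub
  have : {k : ℕ | (k:ℝ) < 1/(s-r)} ⊆ Set.Iio (Nat.ceil (1/(s-r)) + 1) := by
    intro k hk
    simp only [Set.mem_setOf_eq] at hk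
    simp only [Set.mem_Iio]
    have := Nat.le_ceil (1/(s-r))
    have : (k:ℝ) < (Nat.ceil (1/(s-r)) : ℝ) + 1 := by linarith
    exact_mod_cast this
  exact (Set.finite_Iio _).subset this

lemma exists_adFamily {S : Set ℕ} (hS : S.Infinite) :
    ∃ A : ℝ → Set ℕ, (∀ r, (A r).Infinite) ∧ (∀ r, A r ⊆ S) ∧
      ∀ r s : ℝ, r ≠ s → (A r ∩ A s).Finite := by
  let F : ℚ ↪ ℕ :=
    ((Denumerable.eqv ℚ).toEmbedding.trans (Set.Infinite.natEmbedding S hS)).trans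
      (Function.Embedding.subtype _)
  refine ⟨fun r => F '' Set.range (adq r), fun r => ?_, fun r => ?_, fun r s hrs => ?_⟩
  · exact (Set.infinite_range_of_injective (adq_inj r)).image F.injective.injOn
  · rintro n ⟨q, -, rfl⟩
    exact ((Set.Infinite.natEmbedding S hS) _).2
  · rw [← Set.image_inter F.injective]
    rcases hrs.lt_or_gt with h | h
    · exact (adq_inter_finite h).image _
    · rw [Set.inter_comm]
      exact (adq_inter_finite h).image _





lemma C_subset_c0
    (C : Submodule ℝ (lp (fun _ : ℕ => ℝ) ∞))
    (hM : ∀ m : (lp (fun _ : ℕ => ℝ) ∞) →L[ℝ] ℝ,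
      ∃ ξ : lp (fun _ : ℕ => ℝ) 1, ∃ ms : (lp (fun _ : ℕ => ℝ) ∞) →L[ℝ] ℝ,
        (∀ η : lp (fun _ : ℕ => ℝ) ∞, m η = (∑' n : ℕ, ξ n * η n) + ms η) ∧
        (∀ η ∈ C, ms η = 0) ∧ ‖m‖ = ‖ξ‖ + ‖ms‖) :
    ∀ η ∈ C, Tendsto (fun n => (η : ∀ _ : ℕ, ℝ) n) atTop (nhds 0) := by
  classical
  intro η₀ hη₀
  by_contra hnot
  -- extract a positive level and an infinite set where |η₀| ≥ ε
  rw [Metric.tendsto_atTop] at hnot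
  push_neg at hnot
  obtain ⟨ε, hε, hfr⟩ := hnot
  have hTinf : {n : ℕ | ε ≤ |(η₀ : ∀ _ : ℕ, ℝ) n|}.Infinite := by
    rw [← Nat.frequently_atTop_iff_infinite]
    rw [Filter.frequently_atTop]
    intro a
    obtain ⟨n, hn, hd⟩ := hfr a
    refine ⟨n, hn, ?_⟩
    simpa [Real.dist_eq] using hd
  -- pass to η' = ±η₀ with {n | ε ≤ η' n} infinite
  obtain ⟨η', hη'C, hSinf⟩ :
      ∃ η' ∈ C, {n : ℕ | ε ≤ (η' : ∀ _ : ℕ, ℝ) n}.Infinite := by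
    by_cases hpos : {n : ℕ | ε ≤ (η₀ : ∀ _ : ℕ, ℝ) n}.Infinite
    · exact ⟨η₀, hη₀, hpos⟩
    · refine ⟨-η₀, neg_mem hη₀, ?_⟩
      have hsub : {n : ℕ | ε ≤ |(η₀ : ∀ _ : ℕ, ℝ) n|} ⊆
          {n : ℕ | ε ≤ (η₀ : ∀ _ : ℕ, ℝ) n} ∪ {n : ℕ | ε ≤ ((-η₀ : lp (fun _ : ℕ => ℝ) ∞) : ∀ _ : ℕ, ℝ) n} := by
        intro n hn
        simp only [Set.mem_setOf_eq, Set.mem_union] at hn ⊢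
        rcases abs_cases ((η₀ : ∀ _ : ℕ, ℝ) n) with ⟨h1, _⟩ | ⟨h1, _⟩
        · left; linarith
        · right
          have : ((-η₀ : lp (fun _ : ℕ => ℝ) ∞) : ∀ _ : ℕ, ℝ) n = -((η₀ : ∀ _ : ℕ, ℝ) n) := by
            simp [lp.coeFn_neg]
          rw [this]; linarith
      rcases Set.infinite_union.mp (hTinf.mono hsub) with h | h
      · exact absurd h hpos
      · exact h
  set S := {n : ℕ | ε ≤ (η' : ∀ _ : ℕ, ℝ) n} with hSdef
  -- almost disjoint family inside S
  obtain ⟨A, hA1, hA2, hA3⟩ := exists_adFamily hSinf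
  -- ultrafilters
  have hNeBot : ∀ r : ℝ, NeBot (cofinite ⊓ Filter.principal (A r)) := by
    intro r
    rw [Filter.inf_principal_neBot_iff]
    intro U hU
    rw [Filter.mem_cofinite] at hU
    by_contra hne
    rw [Set.not_nonempty_iff_eq_empty] at hne
    have hsub : A r ⊆ Uᶜ := by
      intro n hn
      by_contra h'
      rw [Set.notMem_compl_iff] at h'
      exact Set.eq_empty_iff_forall_notMem.mp hne n ⟨h', hn⟩
    exact hA1 r (hU.subset hsub)
  have key : ∀ r : ℝ, ∃ Uf : Ultrafilter ℕ, A r ∈ Uf ∧ ∀ t : Set ℕ, t.Finite → t ∉ Uf := by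
    intro r
    haveI := hNeBot r
    set Uf := Ultrafilter.of (cofinite ⊓ Filter.principal (A r)) with hUf
    have hle : (Uf : Filter ℕ) ≤ cofinite ⊓ Filter.principal (A r) := Ultrafilter.of_le _
    refine ⟨Uf, ?_, ?_⟩
    · exact hle (Filter.mem_inf_of_right (Filter.mem_principal_self _))
    · intro t ht hmem
      have h1 : tᶜ ∈ Uf := hle (Filter.mem_inf_of_left (by rwa [Filter.mem_cofinite, compl_compl]))
      have h2 : t ∩ tᶜ ∈ Uf := Filter.inter_mem hmem h1
      rw [Set.inter_compl_self] at h2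
      exact Filter.empty_notMem _ h2
  choose Uf hUfA hUfFin using key
  -- decompositions
  choose ξ ms hform hann hnorm using fun r : ℝ => hM (ulimCLM (Uf r))
  -- summability facts
  have hsum : ∀ r : ℝ, Summable fun n => |ξ r n| := by
    intro r
    have := (lp.memℓp (ξ r)).summable (by norm_num : (0:ℝ) < (1 : ENNReal).toReal)
    simpa using this
  have hnormxi : ∀ r : ℝ, ‖ξ r‖ = ∑' n, |ξ r n| := by
    intro r
    have := lp.norm_eq_tsum_rpow (by norm_num : (0:ℝ) < (1 : ENNReal).toReal) (ξ r)
    simpa using this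
  -- each ξ r is nonzero somewhere
  have hgelim : ∀ r : ℝ, ε ≤ ulimCLM (Uf r) η' := by
    intro r
    refine ge_of_tendsto (ulim_tendsto (Uf r) η') ?_
    exact Filter.eventually_of_mem (hUfA r) fun n hn => hA2 r hn
  have hxi_ne : ∀ r : ℝ, ∃ n, ξ r n ≠ 0 := by
    intro r
    by_contra hall
    push_neg at hall
    have h0 : (∑' n, ξ r n * (η' : ∀ _ : ℕ, ℝ) n) = 0 := by
      have : ∀ n, ξ r n * (η' : ∀ _ : ℕ, ℝ) n = 0 := fun n => by rw [hall n]; ring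
      simp [this]
    have := hform r η'
    rw [h0, hann r η' hη'C] at this
    have := hgelim r
    rw [hform r η', h0, hann r η' hη'C] at this
    linarith
  -- norm bounds
  have hnb : ∀ r : ℝ, ‖ξ r‖ + ‖ms r‖ ≤ 1 := fun r => (hnorm r) ▸ ulimCLM_norm_le (Uf r)
  -- pairwise sign condition
  have hsign : ∀ r s : ℝ, r ≠ s → ∀ n, ξ r n * ξ s n ≤ 0 := by
    intro r s hrs
    -- the test vector
    set g : ∀ _ : ℕ, ℝ := fun n => if n ∈ A r then (1:ℝ) else -1 with hg
    have hgb : ∀ n, ‖g n‖ ≤ 1 := by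
      intro n
      rw [hg]
      dsimp only
      split <;> simp
    set ζ : lp (fun _ : ℕ => ℝ) ∞ := ⟨g, memℓp_infty ⟨1, by rintro _ ⟨n, rfl⟩; exact hgb n⟩⟩ with hζ
    have hζcoe : ∀ n, (ζ : ∀ _ : ℕ, ℝ) n = g n := fun n => rfl
    have hζnorm : ‖ζ‖ ≤ 1 := lp.norm_le_of_forall_le zero_le_one fun n => hgb n
    -- ulim values
    have hmr : ulimCLM (Uf r) ζ = 1 := by
      refine ulim_eq (Uf r) ζ ?_
      refine Tendsto.congr' ?_ tendsto_const_nhds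
      refine Filter.eventuallyEq_of_mem (hUfA r) fun n hn => ?_
      rw [hζcoe, hg]; simp [hn]
    have hArs : A r ∉ Uf s := by
      intro hmem
      exact hUfFin s _ (hA3 r s hrs) (Filter.inter_mem hmem (hUfA s))
    have hms' : ulimCLM (Uf s) ζ = -1 := by
      refine ulim_eq (Uf s) ζ ?_
      refine Tendsto.congr' ?_ tendsto_const_nhds
      refine Filter.eventuallyEq_of_mem (Ultrafilter.compl_mem_iff_notMem.mpr hArs) fun n hn => ?_
      rw [hζcoe, hg]
      simp only [Set.mem_compl_iff] at hn
      simp [hn]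
    -- summabilities
    have hsumrz : Summable fun n => ξ r n * (ζ : ∀ _ : ℕ, ℝ) n :=
      Summable.of_norm_bounded (hsum r) fun n => by
        rw [Real.norm_eq_abs, abs_mul]
        calc |ξ r n| * |(ζ : ∀ _ : ℕ, ℝ) n| ≤ |ξ r n| * 1 := by
              refine mul_le_mul_of_nonneg_left ?_ (abs_nonneg _)
              simpa [Real.norm_eq_abs] using hgb n
        _ = |ξ r n| := mul_one _
    have hsumsz : Summable fun n => ξ s n * (ζ : ∀ _ : ℕ, ℝ) n :=
      Summable.of_norm_bounded (hsum s) fun n => by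
        rw [Real.norm_eq_abs, abs_mul]
        calc |ξ s n| * |(ζ : ∀ _ : ℕ, ℝ) n| ≤ |ξ s n| * 1 := by
              refine mul_le_mul_of_nonneg_left ?_ (abs_nonneg _)
              simpa [Real.norm_eq_abs] using hgb n
        _ = |ξ s n| := mul_one _
    have hsumdiff : Summable fun n => |ξ r n - ξ s n| := by
      have := (hsum r).add (hsum s)
      refine Summable.of_norm_bounded this fun n => ?_
      rw [Real.norm_eq_abs, abs_abs]
      exact abs_sub _ _
    -- the key inequality chain
    have h2 : (2:ℝ) = ulimCLM (Uf r) ζ - ulimCLM (Uf s) ζ := by rw [hmr, hms']; ring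
    have hdiff : ulimCLM (Uf r) ζ - ulimCLM (Uf s) ζ =
        (∑' n, (ξ r n - ξ s n) * (ζ : ∀ _ : ℕ, ℝ) n) + (ms r ζ - ms s ζ) := by
      rw [hform r ζ, hform s ζ]
      have : (∑' n, (ξ r n - ξ s n) * (ζ : ∀ _ : ℕ, ℝ) n)
          = (∑' n, ξ r n * (ζ : ∀ _ : ℕ, ℝ) n) - ∑' n, ξ s n * (ζ : ∀ _ : ℕ, ℝ) n := by
        rw [← Summable.tsum_sub hsumrz hsumsz]
        congr 1; funext n; ring
      rw [this]; ring
    have hptbd : ∀ n, ‖(ξ r n - ξ s n) * (ζ : ∀ _ : ℕ, ℝ) n‖ ≤ |ξ r n - ξ s n| := by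
      intro n
      rw [Real.norm_eq_abs, abs_mul]
      calc |ξ r n - ξ s n| * |(ζ : ∀ _ : ℕ, ℝ) n| ≤ |ξ r n - ξ s n| * 1 := by
            refine mul_le_mul_of_nonneg_left ?_ (abs_nonneg _)
            simpa [Real.norm_eq_abs] using hgb n
      _ = _ := mul_one _
    have hsumprod : Summable fun n => ‖(ξ r n - ξ s n) * (ζ : ∀ _ : ℕ, ℝ) n‖ :=
      Summable.of_norm_bounded hsumdiff fun n => by rw [norm_norm]; exact hptbd n
    have habs1 : |∑' n, (ξ r n - ξ s n) * (ζ : ∀ _ : ℕ, ℝ) n| ≤ ∑' n, |ξ r n - ξ s n| := by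
      calc |∑' n, (ξ r n - ξ s n) * (ζ : ∀ _ : ℕ, ℝ) n|
          = ‖∑' n, (ξ r n - ξ s n) * (ζ : ∀ _ : ℕ, ℝ) n‖ := (Real.norm_eq_abs _).symm
      _ ≤ ∑' n, ‖(ξ r n - ξ s n) * (ζ : ∀ _ : ℕ, ℝ) n‖ := norm_tsum_le_tsum_norm hsumprod
      _ ≤ ∑' n, |ξ r n - ξ s n| := Summable.tsum_le_tsum hptbd hsumprod hsumdiff
    have hmsr : |ms r ζ| ≤ ‖ms r‖ := by
      calc |ms r ζ| = ‖ms r ζ‖ := (Real.norm_eq_abs _).symm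
      _ ≤ ‖ms r‖ * ‖ζ‖ := ContinuousLinearMap.le_opNorm _ _
      _ ≤ ‖ms r‖ * 1 := mul_le_mul_of_nonneg_left hζnorm (norm_nonneg _)
      _ = ‖ms r‖ := mul_one _
    have hmss : |ms s ζ| ≤ ‖ms s‖ := by
      calc |ms s ζ| = ‖ms s ζ‖ := (Real.norm_eq_abs _).symm
      _ ≤ ‖ms s‖ * ‖ζ‖ := ContinuousLinearMap.le_opNorm _ _
      _ ≤ ‖ms s‖ * 1 := mul_le_mul_of_nonneg_left hζnorm (norm_nonneg _)
      _ = ‖ms s‖ := mul_one _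
    have hchain : ∑' n, (|ξ r n| + |ξ s n|) ≤ ∑' n, |ξ r n - ξ s n| := by
      have e1 : (2:ℝ) ≤ (∑' n, |ξ r n - ξ s n|) + ‖ms r‖ + ‖ms s‖ := by
        have := h2
        rw [hdiff] at this
        have h3 := abs_le.mp (le_refl |∑' n, (ξ r n - ξ s n) * (ζ : ∀ _ : ℕ, ℝ) n|)
        have hb1 := habs1
        rw [abs_le] at hb1 
        have hb2 := abs_le.mp hmsr
        have hb3 := abs_le.mp hmss
        linarith [hb1.2, hb1.1]
      have e2 : ‖ξ r‖ + ‖ξ s‖ ≤ ∑' n, |ξ r n - ξ s n| := by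
        have hr' := hnb r
        have hs' := hnb s
        linarith [norm_nonneg (ms r), norm_nonneg (ms s)]
      rw [hnormxi r, hnormxi s] at e2
      rw [Summable.tsum_add (hsum r) (hsum s)]
      exact e2
    -- pointwise equality and sign conclusion
    intro n
    by_contra hprod
    push_neg at hprod
    have hD : ∀ m, 0 ≤ |ξ r m| + |ξ s m| - |ξ r m - ξ s m| := by
      intro m
      have := abs_sub (ξ r m) (ξ s m)
      linarith
    have hDsum : Summable fun m => |ξ r m| + |ξ s m| - |ξ r m - ξ s m| :=
      ((hsum r).add (hsum s)).sub hsumdiff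
    have hDle : (∑' m, (|ξ r m| + |ξ s m| - |ξ r m - ξ s m|)) ≤ 0 := by
      rw [Summable.tsum_sub ((hsum r).add (hsum s)) hsumdiff]
      linarith [hchain]
    have hn0 : |ξ r n| + |ξ s n| - |ξ r n - ξ s n| ≤ 0 := by
      have := Summable.le_tsum hDsum n fun m _ => hD m
      linarith
    -- but same strict signs give strict inequality
    rcases mul_pos_iff.mp hprod with ⟨ha, hb⟩ | ⟨ha, hb⟩
    · rw [abs_of_pos ha, abs_of_pos hb] at hn0
      rcases abs_cases (ξ r n - ξ s n) with ⟨he, _⟩ | ⟨he, _⟩ <;> rw [he] at hn0 <;> linarith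
    · rw [abs_of_neg ha, abs_of_neg hb] at hn0
      rcases abs_cases (ξ r n - ξ s n) with ⟨he, _⟩ | ⟨he, _⟩ <;> rw [he] at hn0 <;> linarith
  -- final counting argument
  have hcount : Countable ℝ := by
    have hinj : Function.Injective
        (fun r : ℝ => (((hxi_ne r).choose : ℕ), decide (0 < ξ r (hxi_ne r).choose))) := by
      intro r s hPeq
      by_contra hrs
      have hn := congrArg Prod.fst hPeq
      have hbl := congrArg Prod.snd hPeq
      simp only at hn hbl
      set nr := (hxi_ne r).choose with hnr
      have hr0 : ξ r nr ≠ 0 := (hxi_ne r).choose_spec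
      have hs0 : ξ s (hxi_ne s).choose ≠ 0 := (hxi_ne s).choose_spec
      rw [← hn] at hs0 hbl
      have hiff : (0 < ξ r nr) ↔ (0 < ξ s nr) := by
        rw [decide_eq_decide] at hbl
        exact hbl
      have hsg := hsign r s hrs nr
      rcases lt_or_gt_of_ne hr0 with hneg | hpos
      · have hsneg : ξ s nr < 0 := by
          rcases lt_or_gt_of_ne hs0 with h | h
          · exact h
          · exact absurd (hiff.mpr h) (not_lt.mpr hneg.le)
        nlinarith
      · have hspos : 0 < ξ s nr := hiff.mp hpos
        nlinarith
    exact hinj.countable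
  exact not_countable hcount





lemma exists_approx
    (E : Type*) [NormedAddCommGroup E] [NormedSpace ℝ E]
    (f : ℕ → StrongDual ℝ E)
    (hnorming : ∀ x : E, IsLUB (Set.range fun n => |f n x|) ‖x‖)
    (S : Submodule ℝ E)
    (hc0 : ∀ y ∈ S, Tendsto (fun n => f n y) atTop (nhds 0))
    (x : E) (L M ε' : ℝ) (hL0 : 0 ≤ L) (hM0 : 0 ≤ M) (hε' : 0 < ε')
    (hOL : ∀ᶠ n in atTop, |f n x| < L + ε')
    (y : ℕ → E) (hymem : ∀ j, y j ∈ S) (hMb : ∀ j, ‖y j‖ ≤ M)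
    (hconv : ∀ n, Tendsto (fun j => f n (y j)) atTop (nhds (f n x))) :
    ∃ z ∈ S, ‖x - z‖ ≤ L + 3 * ε' := by
  classical
  have hfb : ∀ z : E, ∀ j : ℕ, |f j z| ≤ ‖z‖ := fun z j => (hnorming z).1 ⟨j, rfl⟩
  obtain ⟨N₀, hN₀⟩ := eventually_atTop.mp hOL
  -- head approximation
  have hhead : ∀ N : ℕ, ∃ j : ℕ, ∀ n ≤ N, |f n (y j) - f n x| ≤ ε' := by
    intro N
    have hev : ∀ᶠ j in atTop, ∀ n ∈ Finset.range (N + 1), |f n (y j) - f n x| ≤ ε' := by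
      rw [Filter.eventually_all_finset]
      intro n _
      obtain ⟨J, hJ⟩ := Metric.tendsto_atTop.mp (hconv n) ε' hε'
      refine eventually_atTop.mpr ⟨J, fun j hj => ?_⟩
      have := hJ j hj
      rw [Real.dist_eq] at this
      linarith
    obtain ⟨j, hj⟩ := hev.exists
    exact ⟨j, fun n hn => hj n (Finset.mem_range.mpr (Nat.lt_succ_of_le hn))⟩
  -- tails of elements of S
  have htail : ∀ u : E, u ∈ S → ∀ N0 : ℕ, ∃ N : ℕ, N0 < N ∧ ∀ n ≥ N, |f n u| ≤ ε' := by
    intro u hu N0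
    have habs : Tendsto (fun n => |f n u|) atTop (nhds 0) := by
      simpa using (hc0 u hu).abs
    obtain ⟨N1, hN1⟩ := eventually_atTop.mp (habs.eventually_lt_const hε')
    refine ⟨max N1 (N0 + 1), ?_, fun n hn => ?_⟩
    · have := le_max_right N1 (N0 + 1); omega
    · have hn1 : N1 ≤ n := le_trans (le_max_left _ _) hn
      exact (hN1 n hn1).le
  -- the recursive gliding-hump construction
  set P : ℕ × E → Prop := fun p =>
    p.2 ∈ S ∧ ‖p.2‖ ≤ M ∧ (∀ n ≤ p.1, |f n p.2 - f n x| ≤ ε') ∧ N₀ ≤ p.1 with hPdef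
  have hbase : ∃ p : ℕ × E, P p := by
    obtain ⟨j, hj⟩ := hhead N₀
    exact ⟨(N₀, y j), hymem j, hMb j, hj, le_refl _⟩
  have hstep : ∀ p : ℕ × E, P p → ∃ p' : ℕ × E, P p' ∧ p.1 < p'.1 ∧
      ∀ n ≥ p'.1, |f n p.2| ≤ ε' := by
    rintro ⟨N, u⟩ ⟨hu1, hu2, hu3, hu4⟩
    obtain ⟨N', hNN', htl⟩ := htail u hu1 N
    obtain ⟨j, hj⟩ := hhead N'
    exact ⟨(N', y j), ⟨hymem j, hMb j, hj, le_trans hu4 hNN'.le⟩, hNN', htl⟩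
  choose qq hq1 hq2 hq3 using hstep
  obtain ⟨p₀, hp₀⟩ := hbase
  set step : {p : ℕ × E // P p} → {p : ℕ × E // P p} :=
    fun prev => ⟨qq prev.1 prev.2, hq1 prev.1 prev.2⟩ with hstepdef
  set seq : ℕ → {p : ℕ × E // P p} := fun i => step^[i] ⟨p₀, hp₀⟩ with hseqdef
  have hsucc : ∀ i, seq (i + 1) = step (seq i) := fun i => by
    rw [hseqdef]
    exact Function.iterate_succ_apply' step i _
  set Nf : ℕ → ℕ := fun i => (seq i).1.1 with hNf
  set uf : ℕ → E := fun i => (seq i).1.2 with huf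
  have hP : ∀ i, uf i ∈ S ∧ ‖uf i‖ ≤ M ∧ (∀ n ≤ Nf i, |f n (uf i) - f n x| ≤ ε') ∧ N₀ ≤ Nf i :=
    fun i => (seq i).2
  have hNsucc : ∀ i, Nf i < Nf (i + 1) := by
    intro i
    show (seq i).1.1 < (seq (i + 1)).1.1
    rw [hsucc i]
    exact hq2 (seq i).1 (seq i).2
  have hNmono : StrictMono Nf := strictMono_nat_of_lt_succ hNsucc
  have htailu : ∀ i, ∀ n, Nf (i + 1) ≤ n → |f n (uf i)| ≤ ε' := by
    intro i n hn
    have h : ∀ n ≥ (step (seq i)).1.1, |f n (seq i).1.2| ≤ ε' := hq3 (seq i).1 (seq i).2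
    refine h n ?_
    rw [← hsucc i]
    exact hn
  -- choice of K
  obtain ⟨K, hK1, hKM⟩ : ∃ K : ℕ, 1 ≤ K ∧ M ≤ (K : ℝ) * ε' := by
    refine ⟨max 1 ⌈M / ε'⌉₊, le_max_left _ _, ?_⟩
    have h1 : M / ε' ≤ (⌈M / ε'⌉₊ : ℝ) := Nat.le_ceil _
    have h2 : ((⌈M / ε'⌉₊ : ℕ) : ℝ) ≤ ((max 1 ⌈M / ε'⌉₊ : ℕ) : ℝ) := by
      exact_mod_cast le_max_right 1 _
    have h3 : M / ε' ≤ ((max 1 ⌈M / ε'⌉₊ : ℕ) : ℝ) := le_trans h1 h2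
    rw [div_le_iff₀ hε'] at h3
    linarith
  have hK0 : (0 : ℝ) < (K : ℝ) := by exact_mod_cast hK1
  -- the approximant
  refine ⟨(K : ℝ)⁻¹ • ∑ i ∈ Finset.range K, uf i, ?_, ?_⟩
  · exact Submodule.smul_mem _ _ (Submodule.sum_mem _ fun i _ => (hP i).1)
  -- the bound
  have hbound : ∀ n : ℕ, |f n (x - (K : ℝ)⁻¹ • ∑ i ∈ Finset.range K, uf i)|
      ≤ L + 2 * ε' + M / K := by
    intro n
    have hterm : ∀ i ∈ Finset.range K, |f n x - f n (uf i)| ≤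
        (L + 2 * ε') + (if Nf i < n ∧ n < Nf (i + 1) then M else 0) := by
      intro i _
      by_cases h1 : n ≤ Nf i
      · have hh := (hP i).2.2.1 n h1
        have habs : |f n x - f n (uf i)| = |f n (uf i) - f n x| := abs_sub_comm _ _
        have hif : (0 : ℝ) ≤ if Nf i < n ∧ n < Nf (i + 1) then M else 0 := by
          split <;> simp [hM0]
        rw [habs]
        linarith
      · push_neg at h1
        have hxb : |f n x| < L + ε' := hN₀ n (le_trans (hP i).2.2.2 h1.le)
        have htri : |f n x - f n (uf i)| ≤ |f n x| + |f n (uf i)| := abs_sub _ _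
        by_cases h2 : Nf (i + 1) ≤ n
        · have hh := htailu i n h2
          have hif : (0 : ℝ) ≤ if Nf i < n ∧ n < Nf (i + 1) then M else 0 := by
            split <;> simp [hM0]
          linarith
        · rw [if_pos ⟨h1, not_le.mp h2⟩]
          have hub : |f n (uf i)| ≤ M := le_trans (hfb (uf i) n) (hP i).2.1
          linarith
    have hifsum : (∑ i ∈ Finset.range K, if Nf i < n ∧ n < Nf (i + 1) then M else 0) ≤ M := by
      have hcard : ((Finset.range K).filter fun i => Nf i < n ∧ n < Nf (i + 1)).card ≤ 1 := by
        refine Finset.card_le_one.mpr fun a ha b hb => ?_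
        have ha' := (Finset.mem_filter.mp ha).2
        have hb' := (Finset.mem_filter.mp hb).2
        by_contra hne
        rcases Nat.lt_or_ge a b with h | h
        · have h1 : a + 1 ≤ b := h
          have h2 : Nf (a + 1) ≤ Nf b := hNmono.monotone h1
          omega
        · have hba : b < a := by omega
          have h1 : b + 1 ≤ a := hba
          have h2 : Nf (b + 1) ≤ Nf a := hNmono.monotone h1
          omega
      rw [← Finset.sum_filter]
      rw [Finset.sum_const]
      have : (((Finset.range K).filter fun i => Nf i < n ∧ n < Nf (i + 1)).card : ℝ) * M
          ≤ 1 * M := by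
        refine mul_le_mul_of_nonneg_right ?_ hM0
        exact_mod_cast hcard
      rw [nsmul_eq_mul]
      linarith
    -- assemble
    have hfz : f n ((K : ℝ)⁻¹ • ∑ i ∈ Finset.range K, uf i)
        = (K : ℝ)⁻¹ * ∑ i ∈ Finset.range K, f n (uf i) := by
      rw [map_smul, map_sum]
      simp [smul_eq_mul]
    have hsplit : f n x - (K : ℝ)⁻¹ * ∑ i ∈ Finset.range K, f n (uf i)
        = (K : ℝ)⁻¹ * ∑ i ∈ Finset.range K, (f n x - f n (uf i)) := by
      rw [Finset.sum_sub_distrib, Finset.sum_const, Finset.card_range, nsmul_eq_mul]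
      field_simp
    have habs2 : |∑ i ∈ Finset.range K, (f n x - f n (uf i))|
        ≤ (K : ℝ) * (L + 2 * ε') + M := by
      calc |∑ i ∈ Finset.range K, (f n x - f n (uf i))|
          ≤ ∑ i ∈ Finset.range K, |f n x - f n (uf i)| := Finset.abs_sum_le_sum_abs _ _
        _ ≤ ∑ i ∈ Finset.range K, ((L + 2 * ε') + (if Nf i < n ∧ n < Nf (i + 1) then M else 0)) :=
            Finset.sum_le_sum hterm
        _ = (K : ℝ) * (L + 2 * ε')
            + ∑ i ∈ Finset.range K, (if Nf i < n ∧ n < Nf (i + 1) then M else 0) := by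
            rw [Finset.sum_add_distrib, Finset.sum_const, Finset.card_range, nsmul_eq_mul]
        _ ≤ (K : ℝ) * (L + 2 * ε') + M := by linarith
    rw [map_sub, hfz, hsplit, abs_mul, abs_of_pos (by positivity : (0:ℝ) < (K : ℝ)⁻¹)]
    calc (K : ℝ)⁻¹ * |∑ i ∈ Finset.range K, (f n x - f n (uf i))|
        ≤ (K : ℝ)⁻¹ * ((K : ℝ) * (L + 2 * ε') + M) := by
          refine mul_le_mul_of_nonneg_left habs2 (by positivity)
      _ = L + 2 * ε' + M / K := by field_simp
  have hzn : ‖x - (K : ℝ)⁻¹ • ∑ i ∈ Finset.range K, uf i‖ ≤ L + 2 * ε' + M / K := by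
    refine (isLUB_le_iff (hnorming _)).mpr ?_
    rintro v ⟨n, rfl⟩
    exact hbound n
  have hMK : M / K ≤ ε' := by
    rw [div_le_iff₀ hK0]
    linarith
  linarith



end DFaux

/-- Distance formula: if `F = {f_j} ⊆ E*` is a countable norming set with `σ(E,F)`-compact
unit ball, `C ⊆ ℓ^∞` an M-embedded isometric predual of `ℓ¹` (i.e. `ba(ℕ) = ℓ¹ ⊕₁ C^⊥`),
`E_C = {x : V(x) ∈ C}`, and the approximation property (AP) holds, then
`dist_E(x, E_C) = limsup_j |f_j(x)|` for every `x ∈ E`. -/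
theorem distance_formula_to_EC
    (E : Type*) [NormedAddCommGroup E] [NormedSpace ℝ E] [CompleteSpace E]
    (f : ℕ → StrongDual ℝ E)
    (hnorming : ∀ x : E, IsLUB (Set.range fun n => |f n x|) ‖x‖)
    (hb : ∀ x : E, BddAbove (Set.range fun n => ‖f n x‖))
    (hcompact : @IsCompact E
      (TopologicalSpace.induced (fun (x : E) (n : ℕ) => f n x) Pi.topologicalSpace)
      (Metric.closedBall (0 : E) 1))
    (C : Submodule ℝ (lp (fun _ : ℕ => ℝ) ∞))
    (hCclosed : IsClosed (C : Set (lp (fun _ : ℕ => ℝ) ∞)))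
    (hCpredual : Nonempty ((C →L[ℝ] ℝ) ≃ₗᵢ[ℝ] lp (fun _ : ℕ => ℝ) 1))
    (hM : ∀ m : StrongDual ℝ (lp (fun _ : ℕ => ℝ) ∞),
      ∃ ξ : lp (fun _ : ℕ => ℝ) 1, ∃ ms : StrongDual ℝ (lp (fun _ : ℕ => ℝ) ∞),
        (∀ η : lp (fun _ : ℕ => ℝ) ∞, m η = (∑' n : ℕ, ξ n * η n) + ms η) ∧
        (∀ η ∈ C, ms η = 0) ∧ ‖m‖ = ‖ξ‖ + ‖ms‖)
    (hAP : ∀ x : E, ∃ y : ℕ → E,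
      (∀ j, y j ∈ Submodule.comap (Vlin E f hb) C) ∧
      (∃ M : ℝ, ∀ j, ‖y j‖ ≤ M) ∧
      (∀ n, Tendsto (fun j => f n (y j)) atTop (nhds (f n x)))) :
    ∀ x : E,
      sInf {r : ℝ | ∃ y ∈ Submodule.comap (Vlin E f hb) C, r = ‖x - y‖} =
        Filter.limsup (fun j => |f j x|) atTop := by
  intro x
  classical
  have hc0 : ∀ z : E, z ∈ Submodule.comap (Vlin E f hb) C →
      Tendsto (fun n => f n z) atTop (nhds 0) := fun z hz =>
    DFaux.C_subset_c0 C hM (Vlin E f hb z) hz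
  set L := Filter.limsup (fun j => |f j x|) atTop with hL
  set D := {r : ℝ | ∃ y ∈ Submodule.comap (Vlin E f hb) C, r = ‖x - y‖} with hD
  have hfb : ∀ z : E, ∀ j : ℕ, |f j z| ≤ ‖z‖ := fun z j => (hnorming z).1 ⟨j, rfl⟩
  have hbdd : IsBoundedUnder (· ≤ ·) atTop (fun j => |f j x|) :=
    isBoundedUnder_of ⟨‖x‖, fun j => hfb x j⟩
  have hcob : IsCoboundedUnder (· ≤ ·) atTop (fun j => |f j x|) :=
    Filter.isCoboundedUnder_le_of_le atTop (fun j => abs_nonneg _)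
  have hL0 : 0 ≤ L :=
    le_limsup_of_frequently_le (Filter.Frequently.of_forall fun j => abs_nonneg _) hbdd
  have hDne : D.Nonempty := ⟨‖x - 0‖, 0, Submodule.zero_mem _, rfl⟩
  have hDbdd : BddBelow D := ⟨0, by rintro r ⟨y, hy, rfl⟩; exact norm_nonneg _⟩
  refine le_antisymm ?_ ?_
  · -- sInf D ≤ L
    refine le_of_forall_pos_le_add fun ε hε => ?_
    obtain ⟨y, hymem, ⟨M, hMb⟩, hconv⟩ := hAP x
    have hM0 : 0 ≤ M := le_trans (norm_nonneg (y 0)) (hMb 0)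
    have hε' : 0 < ε / 3 := by linarith
    have hOL : ∀ᶠ n in atTop, |f n x| < L + ε / 3 := by
      refine eventually_lt_of_limsup_lt ?_ hbdd
      rw [← hL]
      linarith
    obtain ⟨z, hzmem, hzb⟩ := DFaux.exists_approx E f hnorming
      (Submodule.comap (Vlin E f hb) C) hc0 x L M (ε / 3) hL0 hM0 hε' hOL y hymem hMb hconv
    have hsle : sInf D ≤ ‖x - z‖ := csInf_le hDbdd ⟨z, hzmem, rfl⟩
    have : L + 3 * (ε / 3) = L + ε := by ring
    linarith
  · -- L ≤ sInf D
    refine le_csInf hDne ?_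
    rintro r ⟨y, hy, rfl⟩
    refine le_of_forall_pos_le_add fun ε hε => ?_
    have habs : Tendsto (fun j => |f j y|) atTop (nhds 0) := by
      simpa using (hc0 y hy).abs
    have hev : ∀ᶠ j in atTop, |f j x| ≤ ‖x - y‖ + ε := by
      filter_upwards [habs.eventually_lt_const hε] with j hj
      have h1 : |f j (x - y)| ≤ ‖x - y‖ := hfb _ j
      rw [map_sub] at h1
      have h2 := abs_sub_abs_le_abs_sub (f j x) (f j y)
      linarith
    exact limsup_le_of_le hcob hev
end
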